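/- Let T be a non-negative self-adjoint bounded operator on a finite-dimensional (or separable) Hilbert space H with discrete spectrum 0 = λ₀ < λ₁ ≤ λ₂ ≤ ... (counted with multiplicities) and corresponding orthonormal basis of eigenvectors φ₀, φ₁, .... Let ψ ∈ H be nonzero. Then for every f ∈ H with ⟨ψ, f⟩ = 0, one has λ₁² · |⟨ψ, φ₀⟩|² / ‖ψ‖² · ‖f‖² ≤ ‖T f‖². -/

import Mathlib

open scoped InnerProductSpace

/-- Lemma 7.1 (Appendix): if `T` is a non-negative self-adjoint bounded operator with
orthonormal eigenbasis `φ`, eigenvalues `0 = λ₀ < λ₁ ≤ λ₂ ≤ ...`, and `ψ ≠ 0`, then for every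
`f ⟂ ψ` one has `λ₁² |⟨ψ, φ₀⟩|² / ‖ψ‖² · ‖f‖² ≤ ‖T f‖²`. -/
theorem stmt0 {H : Type*} [NormedAddCommGroup H] [InnerProductSpace ℂ H]
    {n : ℕ} (T : H →L[ℂ] H)
    (hsa : ∀ x y : H, ⟪T x, y⟫_ℂ = ⟪x, T y⟫_ℂ)
    (hnn : ∀ x : H, 0 ≤ (⟪T x, x⟫_ℂ).re)
    (φ : Fin (n + 2) → H) (hON : Orthonormal ℂ φ)
    (hbasis : ∀ f : H, f ∈ Submodule.span ℂ (Set.range φ))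
    (lam : Fin (n + 2) → ℝ)
    (heig : ∀ k, T (φ k) = (lam k : ℂ) • φ k)
    (h0 : lam 0 = 0) (h1 : 0 < lam 1) (hmono : Monotone lam)
    (ψ : H) (hψ : ψ ≠ 0)
    (f : H) (hf : ⟪ψ, f⟫_ℂ = 0) :
    lam 1 ^ 2 * ‖⟪ψ, φ 0⟫_ℂ‖ ^ 2 / ‖ψ‖ ^ 2 * ‖f‖ ^ 2 ≤ ‖T f‖ ^ 2 := by
  classical
  set b : OrthonormalBasis (Fin (n + 2)) ℂ H :=
    OrthonormalBasis.mk hON (fun x _ => hbasis x) with hbdef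
  have hb : ⇑b = φ := OrthonormalBasis.coe_mk _ _
  set c : Fin (n + 2) → ℂ := fun k => ⟪φ k, f⟫_ℂ with hc
  set a : Fin (n + 2) → ℂ := fun k => ⟪φ k, ψ⟫_ℂ with ha
  -- Parseval
  have hnormsq : ∀ x : H, ‖x‖ ^ 2 = ∑ k, ‖⟪φ k, x⟫_ℂ‖ ^ 2 := by
    intro x
    have h := b.sum_inner_mul_inner x x
    simp only [hb] at h
    rw [@InnerProductSpace.norm_sq_eq_re_inner ℂ, ← h, map_sum]
    refine Finset.sum_congr rfl fun k _ => ?_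
    rw [← inner_conj_symm x (φ k), RCLike.conj_mul]
    simp [← Complex.ofReal_pow]
  -- expansion of f
  have hfex : f = ∑ k, c k • φ k := by
    have h := b.sum_repr' f
    simp only [hb] at h
    exact h.symm
  -- expansion of T f
  have hTf : T f = ∑ k, ((lam k : ℂ) * c k) • φ k := by
    calc T f = T (∑ k, c k • φ k) := by rw [← hfex]
      _ = ∑ k, c k • T (φ k) := by rw [map_sum]; simp only [map_smul]
      _ = ∑ k, ((lam k : ℂ) * c k) • φ k := by
          refine Finset.sum_congr rfl fun k _ => ?_
          rw [heig k, smul_smul, mul_comm]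
  -- norm of T f
  have hTfn : ‖T f‖ ^ 2 = ∑ k, lam k ^ 2 * ‖c k‖ ^ 2 := by
    rw [@InnerProductSpace.norm_sq_eq_re_inner ℂ, hTf, hON.inner_sum, map_sum]
    refine Finset.sum_congr rfl fun k _ => ?_
    rw [RCLike.conj_mul]
    simp [← Complex.ofReal_pow, norm_mul, map_mul, Complex.norm_real, mul_pow, sq_abs]
  -- orthogonality in coordinates
  have hfsum : ∑ k, (starRingEnd ℂ) (a k) * c k = 0 := by
    have h : ⟪ψ, ∑ k, c k • φ k⟫_ℂ = 0 := by rw [← hfex]; exact hf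
    rw [inner_sum] at h
    have : ∀ k, ⟪ψ, c k • φ k⟫_ℂ = (starRingEnd ℂ) (a k) * c k := by
      intro k
      rw [inner_smul_right, ha]
      simp only [inner_conj_symm]
      ring
    rw [Finset.sum_congr rfl fun k _ => this k] at h
    exact h
  set SA : ℝ := ∑ k ∈ ({0}ᶜ : Finset (Fin (n + 2))), ‖a k‖ ^ 2 with hSA
  set SC : ℝ := ∑ k ∈ ({0}ᶜ : Finset (Fin (n + 2))), ‖c k‖ ^ 2 with hSC
  have hψn : ‖ψ‖ ^ 2 = ‖a 0‖ ^ 2 + SA := by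
    rw [hnormsq ψ, Fintype.sum_eq_add_sum_compl 0]
  have hfn : ‖f‖ ^ 2 = ‖c 0‖ ^ 2 + SC := by
    rw [hnormsq f, Fintype.sum_eq_add_sum_compl 0]
  have hSAnn : 0 ≤ SA := Finset.sum_nonneg fun k _ => sq_nonneg _
  have hSCnn : 0 ≤ SC := Finset.sum_nonneg fun k _ => sq_nonneg _
  -- key Cauchy-Schwarz estimate
  have hkey : ‖a 0‖ ^ 2 * ‖c 0‖ ^ 2 ≤ SA * SC := by
    have heq : (starRingEnd ℂ) (a 0) * c 0
        = - ∑ k ∈ ({0}ᶜ : Finset (Fin (n + 2))), (starRingEnd ℂ) (a k) * c k := by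
      have h := hfsum
      rw [Fintype.sum_eq_add_sum_compl 0] at h
      linear_combination h
    have h1 : ‖(starRingEnd ℂ) (a 0) * c 0‖
        ≤ ∑ k ∈ ({0}ᶜ : Finset (Fin (n + 2))), ‖a k‖ * ‖c k‖ := by
      rw [heq, norm_neg]
      refine (norm_sum_le _ _).trans (Finset.sum_le_sum fun k _ => ?_)
      rw [norm_mul, RCLike.norm_conj]
    have h2 := Finset.sum_mul_sq_le_sq_mul_sq ({0}ᶜ : Finset (Fin (n + 2)))
      (fun k => ‖a k‖) (fun k => ‖c k‖)
    calc ‖a 0‖ ^ 2 * ‖c 0‖ ^ 2 = ‖(starRingEnd ℂ) (a 0) * c 0‖ ^ 2 := by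
          rw [norm_mul, RCLike.norm_conj, mul_pow]
      _ ≤ (∑ k ∈ ({0}ᶜ : Finset (Fin (n + 2))), ‖a k‖ * ‖c k‖) ^ 2 :=
          pow_le_pow_left₀ (norm_nonneg _) h1 2
      _ ≤ SA * SC := h2
  -- lower bound on ‖T f‖²
  have hTlower : lam 1 ^ 2 * SC ≤ ‖T f‖ ^ 2 := by
    rw [hTfn, Fintype.sum_eq_add_sum_compl 0, h0]
    have : lam 1 ^ 2 * SC ≤ ∑ k ∈ ({0}ᶜ : Finset (Fin (n + 2))), lam k ^ 2 * ‖c k‖ ^ 2 := by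
      rw [hSC, Finset.mul_sum]
      refine Finset.sum_le_sum fun k hk => ?_
      have hk0 : k ≠ 0 := by simpa using hk
      have hk1 : (1 : Fin (n + 2)) ≤ k := by
        rw [Fin.le_def]
        have : k.val ≠ 0 := fun h => hk0 (Fin.ext (by simpa using h))
        simp [Fin.val_one]
        omega
      have hlk : lam 1 ≤ lam k := hmono hk1
      have : lam 1 ^ 2 ≤ lam k ^ 2 := by nlinarith
      nlinarith [sq_nonneg ‖c k‖]
    nlinarith [sq_nonneg ‖c 0‖]
  have hψpos : 0 < ‖ψ‖ ^ 2 := pow_pos (norm_pos_iff.mpr hψ) 2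
  have hinner : ‖⟪ψ, φ 0⟫_ℂ‖ = ‖a 0‖ := by rw [ha]; exact norm_inner_symm ψ (φ 0)
  rw [hinner, div_mul_eq_mul_div, div_le_iff₀ hψpos]
  have F1 : lam 1 ^ 2 * (‖a 0‖ ^ 2 * ‖c 0‖ ^ 2) ≤ lam 1 ^ 2 * (SA * SC) :=
    mul_le_mul_of_nonneg_left hkey (sq_nonneg _)
  have F2 : (lam 1 ^ 2 * SC) * ‖ψ‖ ^ 2 ≤ ‖T f‖ ^ 2 * ‖ψ‖ ^ 2 :=
    mul_le_mul_of_nonneg_right hTlower hψpos.le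
  rw [hψn] at F2 ⊢
  rw [hfn]
  nlinarith [F1, F2, sq_nonneg (lam 1), mul_nonneg (sq_nonneg (lam 1)) (mul_nonneg (sq_nonneg ‖a 0‖) hSCnn)]
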